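/- Fix m ≥ 1. Every central maximal intersecting subfamily F of P([m]) is ∅-minimal; that is, for every a ∈ [m] and every A ⊆ [m]\{a}, Λ(F*)_{(∅,{a})} ≤ Λ(F*)_{(A, A∪{a})}. -/

import Mathlib

open Finset

variable {m : ℕ}

/-- A family of finsets is intersecting if any two members meet. -/
def IsIntersecting (F : Finset (Finset (Fin m))) : Prop :=
  ∀ A ∈ F, ∀ B ∈ F, (A ∩ B).Nonempty

/-- A maximal intersecting subfamily of the power set of `Fin m`. -/
def IsMaxIntersecting (F : Finset (Finset (Fin m))) : Prop :=
  IsIntersecting F ∧ ∀ G : Finset (Finset (Fin m)), IsIntersecting G → F ⊆ G → G ⊆ F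

/-- A family is subset-closed if it contains all subsets of its members. -/
def IsSubsetClosed (F : Finset (Finset (Fin m))) : Prop :=
  ∀ A ∈ F, ∀ B ⊆ A, B ∈ F

/-- The embedding of a family into `ℝ^{P([m])}`. -/
def famVec (F : Finset (Finset (Fin m))) : Finset (Fin m) → ℝ := fun A =>
  if A ∈ F ∧ Aᶜ ∉ F then 1 else if A ∉ F ∧ Aᶜ ∈ F then -1 else 0

/-- The standard basis vector `e_A` of `ℝ^{P([m])}`. -/
def stdBasis (A : Finset (Fin m)) : Finset (Fin m) → ℝ := fun B => if B = A then 1 else 0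

/-- The star of a family centered at `a`. -/
def starFam (a : Fin m) (F : Finset (Finset (Fin m))) : Finset (Finset (Fin m)) :=
  F.filter fun A => a ∈ A

/-- The setwise complement (dual) `F* = {Aᶜ : A ∈ F}`. -/
def dualFam (F : Finset (Finset (Fin m))) : Finset (Finset (Fin m)) :=
  F.image fun A => Aᶜ

/-- `Tpath σ C k = C △ {σ(1), …, σ(k)}` (0-indexed: the images of the first `k` indices). -/
def Tpath (σ : Equiv.Perm (Fin m)) (C : Finset (Fin m)) (k : ℕ) : Finset (Fin m) :=
  symmDiff C ((Finset.univ.filter fun i : Fin m => (i : ℕ) < k).image σ)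

/-- The path-sum `Λ(H)` as a vector in `ℝ^{P([m]) × P([m])}`: at coordinate `(X, Y)` it is the
number of triples `(σ, C, k)` whose `k`-th path step goes from `X` to `Y`, minus the number of
triples whose `k`-th step goes from `Y` to `X`. -/
def LamW (H : Finset (Finset (Fin m))) (X Y : Finset (Fin m)) : ℝ :=
  ∑ σ : Equiv.Perm (Fin m), ∑ C ∈ H, ∑ k ∈ Finset.Icc 1 m,
    ((if Tpath σ C (k - 1) = X ∧ Tpath σ C k = Y then (1 : ℝ) else 0)
      - (if Tpath σ C (k - 1) = Y ∧ Tpath σ C k = X then (1 : ℝ) else 0))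

/-- A maximal intersecting family `F` is `∅`-minimal if for every `a`, the coordinate
`Λ(F*)_{(∅,{a})}` is the minimum of `Λ(F*)_{(A, A ∪ {a})}` over all `A ⊆ [m] \ {a}`. -/
def EmptyMinimal (F : Finset (Finset (Fin m))) : Prop :=
  ∀ a : Fin m, ∀ A : Finset (Fin m), a ∉ A →
    LamW (dualFam F) ∅ {a} ≤ LamW (dualFam F) A (insert a A)

open Equiv
namespace CentralAux

variable {m : ℕ}

def idx (m k : ℕ) : Finset (Fin m) := univ.filter fun i => (i : ℕ) < k

lemma mem_idx {k : ℕ} {i : Fin m} : i ∈ idx m k ↔ (i : ℕ) < k := by simp [idx]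

lemma card_idx (k : ℕ) (hk : k ≤ m) : (idx m k).card = k := by
  have : idx m k = (univ : Finset (Fin k)).map (Fin.castLEEmb hk) := by
    ext i
    simp only [mem_idx, Finset.mem_map, Finset.mem_univ, true_and]
    constructor
    · intro h; exact ⟨⟨(i : ℕ), h⟩, by ext; simp [Fin.castLEEmb]⟩
    · rintro ⟨j, rfl⟩; simpa [Fin.castLEEmb] using j.isLt
  rw [this, Finset.card_map, Finset.card_univ, Fintype.card_fin]

lemma idx_succ (k : ℕ) (hk : k < m) :
    idx m (k + 1) = insert (⟨k, hk⟩ : Fin m) (idx m k) := by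
  ext i
  simp [mem_idx, Nat.lt_succ_iff_lt_or_eq, Fin.ext_iff, or_comm]; omega

lemma self_not_mem_idx (k : ℕ) (hk : k < m) : (⟨k, hk⟩ : Fin m) ∉ idx m k := by
  simp [mem_idx]

lemma symmDiff_singleton_of_not_mem {A : Finset (Fin m)} {a : Fin m} (ha : a ∉ A) :
    symmDiff A {a} = insert a A := by
  ext x
  by_cases hx : x = a <;> simp [Finset.mem_symmDiff, hx, ha]

lemma symmDiff_singleton_of_mem {A : Finset (Fin m)} {a : Fin m} (ha : a ∈ A) :
    symmDiff A {a} = A.erase a := by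
  ext x
  by_cases hx : x = a <;> simp [Finset.mem_symmDiff, hx, ha]

lemma tpath_eq_iff {σ : Perm (Fin m)} {C X : Finset (Fin m)} {k : ℕ} :
    Tpath σ C k = X ↔ (idx m k).image σ = symmDiff C X := by
  show symmDiff C ((idx m k).image σ) = X ↔ _
  constructor
  · intro h; rw [← h]; exact (symmDiff_symmDiff_cancel_left _ _).symm
  · intro h; rw [h]; exact symmDiff_symmDiff_cancel_left _ _

def goodSet (S : Finset (Fin m)) (a : Fin m) : Finset (Perm (Fin m)) :=
  univ.filter fun σ =>
    (idx m S.card).image σ = S ∧ ∀ i : Fin m, (i : ℕ) = S.card → σ i = a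

lemma mem_goodSet {S : Finset (Fin m)} {a : Fin m} {σ : Perm (Fin m)} :
    σ ∈ goodSet S a ↔
      (idx m S.card).image σ = S ∧ ∀ i : Fin m, (i : ℕ) = S.card → σ i = a := by
  simp [goodSet]


lemma fiber_const (p a b : Fin m) :
    (univ.filter fun σ : Perm (Fin m) => σ p = a).card
      = (univ.filter fun σ : Perm (Fin m) => σ p = b).card := by
  refine Finset.card_bij' (fun σ _ => σ.trans (Equiv.swap a b))
    (fun σ _ => σ.trans (Equiv.swap a b)) ?_ ?_ ?_ ?_
  · intro σ hσ
    simp only [Finset.mem_filter, Finset.mem_univ, true_and] at hσ ⊢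
    simp [hσ]
  · intro σ hσ
    simp only [Finset.mem_filter, Finset.mem_univ, true_and] at hσ ⊢
    simp [hσ]
  · intro σ _; ext x; simp
  · intro σ _; ext x; simp

lemma card_fixed_mul (p a : Fin m) :
    (univ.filter fun σ : Perm (Fin m) => σ p = a).card * m = m.factorial := by
  have h := Finset.card_eq_sum_card_fiberwise
    (f := fun σ : Perm (Fin m) => σ p) (s := univ) (t := univ) (fun x _ => mem_univ _)
  have h2 : ∀ b ∈ (univ : Finset (Fin m)),
      (univ.filter fun σ : Perm (Fin m) => σ p = b).card
        = (univ.filter fun σ : Perm (Fin m) => σ p = a).card :=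
    fun b _ => (fiber_const p a b).symm
  rw [Finset.sum_congr rfl h2, Finset.sum_const] at h
  simp only [Finset.card_univ, Fintype.card_perm, Fintype.card_fin, smul_eq_mul] at h
  rw [mul_comm]; exact h.symm

lemma card_fixed (p a : Fin m) :
    (univ.filter fun σ : Perm (Fin m) => σ p = a).card = (m - 1).factorial := by
  have hm : 0 < m := Fin.pos p
  have h := card_fixed_mul p a
  have h2 : (m - 1).factorial * m = m.factorial := by
    conv_rhs => rw [show m = m - 1 + 1 from by omega]
    rw [Nat.factorial_succ, show m - 1 + 1 = m from by omega, mul_comm]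
  exact Nat.eq_of_mul_eq_mul_right hm (h.trans h2.symm)

lemma image_swap_self {t : Finset (Fin m)} {b a' : Fin m} (hb : b ∈ t) (ha' : a' ∈ t) :
    t.image (Equiv.swap b a') = t := by
  apply Finset.eq_of_subset_of_card_le
  · intro x hx
    rw [Finset.mem_image] at hx
    obtain ⟨y, hy, rfl⟩ := hx
    rcases eq_or_ne y b with rfl | h1
    · rwa [Equiv.swap_apply_left]
    rcases eq_or_ne y a' with rfl | h2
    · rwa [Equiv.swap_apply_right]
    · rwa [Equiv.swap_apply_of_ne_of_ne h1 h2]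
  · rw [Finset.card_image_of_injective _ (Equiv.injective _)]

lemma exists_perm {S S' : Finset (Fin m)} {a a' : Fin m} (ha : a ∉ S) (ha' : a' ∉ S')
    (hc : S.card = S'.card) :
    ∃ g : Perm (Fin m), S.image g = S' ∧ g a = a' := by
  classical
  have hcc : (insert a S).card = (insert a' S').card := by
    rw [Finset.card_insert_of_notMem ha, Finset.card_insert_of_notMem ha', hc]
  set e := Finset.equivOfCardEq hcc
  set g₁ : Perm (Fin m) := Equiv.extendSubtype e with hg₁
  have hmem : ∀ x ∈ insert a S, g₁ x ∈ insert a' S' := by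
    intro x hx
    exact Equiv.extendSubtype_mem e x hx
  have himg : (insert a S).image g₁ = insert a' S' := by
    apply Finset.eq_of_subset_of_card_le
    · intro x hx
      rw [Finset.mem_image] at hx
      obtain ⟨y, hy, rfl⟩ := hx
      exact hmem y hy
    · rw [Finset.card_image_of_injective _ (Equiv.injective _), hcc]
  set b := g₁ a with hb
  have hbmem : b ∈ insert a' S' := hmem a (Finset.mem_insert_self a S)
  refine ⟨g₁.trans (Equiv.swap b a'), ?_, ?_⟩
  · have himg2 : (insert a S).image (g₁.trans (Equiv.swap b a')) = insert a' S' := by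
      have : (insert a S).image (g₁.trans (Equiv.swap b a'))
          = ((insert a S).image g₁).image (Equiv.swap b a') := by
        rw [Finset.image_image]; rfl
      rw [this, himg, image_swap_self hbmem (Finset.mem_insert_self a' S')]
    have hga : (g₁.trans (Equiv.swap b a')) a = a' := by
      simp [hb, Equiv.swap_apply_left]
    rw [Finset.image_insert, hga] at himg2
    have hnot : a' ∉ S.image (g₁.trans (Equiv.swap b a')) := by
      intro hmem'
      rw [Finset.mem_image] at hmem'
      obtain ⟨y, hy, hy'⟩ := hmem'
      have : y = a := (Equiv.injective _) (hy'.trans hga.symm)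
      exact ha (this ▸ hy)
    calc S.image (g₁.trans (Equiv.swap b a'))
        = (insert a' (S.image (g₁.trans (Equiv.swap b a')))).erase a' :=
          (Finset.erase_insert hnot).symm
      _ = (insert a' S').erase a' := by rw [himg2]
      _ = S' := Finset.erase_insert ha'
  · simp [hb, Equiv.swap_apply_left]

lemma goodSet_card_congr {S S' : Finset (Fin m)} {a a' : Fin m} (ha : a ∉ S) (ha' : a' ∉ S')
    (hc : S.card = S'.card) : (goodSet S a).card = (goodSet S' a').card := by
  obtain ⟨g, hgS, hga⟩ := exists_perm ha ha' hc
  refine Finset.card_bij' (fun σ _ => σ.trans g) (fun σ _ => σ.trans g.symm) ?_ ?_ ?_ ?_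
  · intro σ hσ
    rw [mem_goodSet] at hσ ⊢
    obtain ⟨h1, h2⟩ := hσ
    constructor
    · rw [← hc]
      have : (idx m S.card).image (σ.trans g) = ((idx m S.card).image σ).image g := by
        rw [Finset.image_image]; rfl
      rw [this, h1, hgS]
    · intro i hi
      rw [← hc] at hi
      show g (σ i) = a'
      rw [h2 i hi, hga]
  · intro σ hσ
    rw [mem_goodSet] at hσ ⊢
    obtain ⟨h1, h2⟩ := hσ
    constructor
    · rw [hc]
      have : (idx m S'.card).image (σ.trans g.symm) = ((idx m S'.card).image σ).image g.symm := by
        rw [Finset.image_image]; rfl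
      rw [this, h1, ← hgS, Finset.image_image]
      have : (⇑g.symm ∘ ⇑g) = id := by ext x; simp
      rw [this, Finset.image_id]
    · intro i hi
      rw [hc] at hi
      show g.symm (σ i) = a
      rw [h2 i hi, ← hga]; simp
  · intro σ _; ext x; simp
  · intro σ _; ext x; simp

lemma goodSet_sum (a : Fin m) (s : ℕ) (hs : s < m) :
    ∑ S ∈ (univ.erase a).powersetCard s, (goodSet S a).card = (m - 1).factorial := by
  have h : ∀ σ ∈ (univ.filter fun σ : Perm (Fin m) => σ ⟨s, hs⟩ = a),
      (idx m s).image σ ∈ (univ.erase a).powersetCard s := by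
    intro σ hσ
    rw [Finset.mem_filter] at hσ
    rw [Finset.mem_powersetCard]
    constructor
    · intro x hx
      rw [Finset.mem_image] at hx
      obtain ⟨i, hi, rfl⟩ := hx
      rw [Finset.mem_erase]
      refine ⟨fun hxa => ?_, mem_univ _⟩
      have hieq : i = ⟨s, hs⟩ := σ.injective (hxa.trans hσ.2.symm)
      rw [mem_idx, hieq] at hi
      simp at hi
    · rw [Finset.card_image_of_injective _ σ.injective, card_idx s hs.le]
  have key := Finset.card_eq_sum_card_fiberwise h
  have eq1 : ∀ S ∈ (univ.erase a).powersetCard s, (goodSet S a).card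
      = ((univ.filter fun σ : Perm (Fin m) => σ ⟨s, hs⟩ = a).filter
          (fun σ : Perm (Fin m) => Finset.image (⇑σ) (idx m s) = S)).card := by
    intro S hS
    rw [Finset.mem_powersetCard] at hS
    obtain ⟨hSsub, hScard⟩ := hS
    congr 1
    rw [Finset.filter_filter]
    unfold goodSet
    apply Finset.filter_congr
    intro σ _
    rw [hScard]
    constructor
    · rintro ⟨h1, h2⟩
      exact ⟨h2 ⟨s, hs⟩ rfl, h1⟩
    · rintro ⟨h1, h2⟩
      refine ⟨h2, fun i hi => ?_⟩
      have : i = ⟨s, hs⟩ := Fin.ext hi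
      rw [this]; exact h1
  rw [Finset.sum_congr rfl eq1, ← key, card_fixed]

lemma goodSet_mul_choose {S : Finset (Fin m)} {a : Fin m} (ha : a ∉ S) :
    (goodSet S a).card * (m - 1).choose S.card = (m - 1).factorial := by
  have hm : 0 < m := Fin.pos a
  have hsub : S ⊆ univ.erase a := fun x hx =>
    Finset.mem_erase.mpr ⟨fun h => ha (h ▸ hx), mem_univ x⟩
  have hcard : S.card ≤ m - 1 := by
    have := Finset.card_le_card hsub
    rwa [Finset.card_erase_of_mem (mem_univ a), Finset.card_univ, Fintype.card_fin] at this
  have hs : S.card < m := by omega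
  have hsum := goodSet_sum a S.card hs
  have heach : ∀ S' ∈ (univ.erase a).powersetCard S.card,
      (goodSet S' a).card = (goodSet S a).card := by
    intro S' hS'
    rw [Finset.mem_powersetCard] at hS'
    exact goodSet_card_congr (fun h => ((Finset.mem_erase.mp (hS'.1 h)).1 rfl)) ha hS'.2
  rw [Finset.sum_congr rfl heach, Finset.sum_const, smul_eq_mul, Finset.card_powersetCard,
    Finset.card_erase_of_mem (mem_univ a), Finset.card_univ, Fintype.card_fin] at hsum
  rw [mul_comm]; exact hsum

lemma indicator_zero {C X Y : Finset (Fin m)} {a : Fin m} (haT : a ∈ symmDiff C X)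
    (hY : symmDiff C Y = (symmDiff C X).erase a) (σ : Perm (Fin m)) (k : ℕ) :
    ¬ (Tpath σ C (k - 1) = X ∧ Tpath σ C k = Y) := by
  rintro ⟨h1, h2⟩
  rw [tpath_eq_iff] at h1 h2
  have hsub : symmDiff C X ⊆ symmDiff C Y := by
    rw [← h1, ← h2]
    apply Finset.image_subset_image
    intro i hi
    rw [mem_idx] at hi ⊢
    omega
  rw [hY] at hsub
  exact (Finset.mem_erase.mp (hsub haT)).1 rfl

lemma step_count_zero {C X Y : Finset (Fin m)} {a : Fin m} (haT : a ∈ symmDiff C X)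
    (hY : symmDiff C Y = (symmDiff C X).erase a) :
    ∑ σ : Perm (Fin m), ∑ k ∈ Finset.Icc 1 m,
      (if Tpath σ C (k - 1) = X ∧ Tpath σ C k = Y then (1 : ℝ) else 0) = 0 :=
  Finset.sum_eq_zero fun σ _ => Finset.sum_eq_zero fun k _ =>
    if_neg (indicator_zero haT hY σ k)

lemma step_count {C X Y : Finset (Fin m)} {a : Fin m} (haT : a ∉ symmDiff C X)
    (hY : symmDiff C Y = insert a (symmDiff C X)) :
    ∑ σ : Perm (Fin m), ∑ k ∈ Finset.Icc 1 m,
      (if Tpath σ C (k - 1) = X ∧ Tpath σ C k = Y then (1 : ℝ) else 0)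
      = ((goodSet (symmDiff C X) a).card : ℝ) := by
  set T := symmDiff C X with hT
  set s := T.card with hs
  have hm : 0 < m := Fin.pos a
  have hsub : T ⊆ univ.erase a := fun x hx =>
    Finset.mem_erase.mpr ⟨fun h => haT (h ▸ hx), mem_univ x⟩
  have hsm : s < m := by
    have := Finset.card_le_card hsub
    rw [Finset.card_erase_of_mem (mem_univ a), Finset.card_univ, Fintype.card_fin] at this
    omega
  have hinner : ∀ σ : Perm (Fin m), ∑ k ∈ Finset.Icc 1 m,
      (if Tpath σ C (k - 1) = X ∧ Tpath σ C k = Y then (1 : ℝ) else 0)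
      = (if σ ∈ goodSet T a then (1 : ℝ) else 0) := by
    intro σ
    rw [Finset.sum_eq_single (s + 1)]
    · rw [Nat.add_sub_cancel]
      apply if_congr ?_ rfl rfl
      constructor
      · rintro ⟨h1, h2⟩
        rw [tpath_eq_iff] at h1 h2
        rw [hY, idx_succ s hsm, Finset.image_insert, h1] at h2
        have hb : σ ⟨s, hsm⟩ ∉ T := by
          rw [hT, ← h1]
          intro hmem
          rw [Finset.mem_image] at hmem
          obtain ⟨i, hi, hei⟩ := hmem
          have : i = ⟨s, hsm⟩ := σ.injective hei
          rw [this, mem_idx] at hi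
          simp at hi
        have hσa : σ ⟨s, hsm⟩ = a := by
          have hmem := h2 ▸ Finset.mem_insert_self (σ ⟨s, hsm⟩) T
          rcases Finset.mem_insert.mp hmem with h | h
          · exact h
          · exact absurd h hb
        rw [mem_goodSet]
        exact ⟨h1, fun i hi => by
          have : i = ⟨s, hsm⟩ := Fin.ext hi
          rw [this]; exact hσa⟩
      · intro hσ
        rw [mem_goodSet] at hσ
        obtain ⟨h1, h2⟩ := hσ
        have hσa : σ ⟨s, hsm⟩ = a := h2 _ rfl
        constructor
        · rw [tpath_eq_iff]; exact h1
        · rw [tpath_eq_iff, hY, idx_succ s hsm, Finset.image_insert, h1, hσa]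
    · intro k hk hne
      rw [Finset.mem_Icc] at hk
      rw [if_neg]
      rintro ⟨h1, _⟩
      rw [tpath_eq_iff] at h1
      have hcard : (idx m (k - 1)).card = s := by
        rw [← Finset.card_image_of_injective (idx m (k - 1)) σ.injective, h1]
      rw [card_idx (k - 1) (by omega)] at hcard
      omega
    · intro hnot
      exfalso
      apply hnot
      rw [Finset.mem_Icc]
      omega
  rw [Finset.sum_congr rfl (fun σ _ => hinner σ), Finset.sum_ite_mem, Finset.univ_inter,
    Finset.sum_const, nsmul_eq_mul, mul_one]

lemma symmDiff_insert_right {C A : Finset (Fin m)} {a : Fin m} (ha : a ∉ A) :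
    symmDiff C (insert a A) = symmDiff (symmDiff C A) {a} := by
  rw [← symmDiff_singleton_of_not_mem ha, ← symmDiff_assoc]

lemma lam_formula (H : Finset (Finset (Fin m))) {a : Fin m} {A : Finset (Fin m)} (ha : a ∉ A) :
    LamW H A (insert a A) = ∑ C ∈ H,
      (if a ∈ C then -((goodSet (symmDiff C (insert a A)) a).card : ℝ)
        else ((goodSet (symmDiff C A) a).card : ℝ)) := by
  unfold LamW
  rw [Finset.sum_comm]
  apply Finset.sum_congr rfl
  intro C _
  simp only [Finset.sum_sub_distrib]
  by_cases hc : a ∈ C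
  · rw [if_pos hc]
    have haT : a ∈ symmDiff C A := Finset.mem_symmDiff.mpr (Or.inl ⟨hc, ha⟩)
    have hY : symmDiff C (insert a A) = (symmDiff C A).erase a := by
      rw [symmDiff_insert_right ha, symmDiff_singleton_of_mem haT]
    have h1 := step_count_zero (C := C) (X := A) (Y := insert a A) haT hY
    have haT' : a ∉ symmDiff C (insert a A) := by
      rw [hY]; simp
    have hY' : symmDiff C A = insert a (symmDiff C (insert a A)) := by
      rw [hY, Finset.insert_erase haT]
    have h2 := step_count (C := C) (X := insert a A) (Y := A) haT' hY'
    rw [h1, h2]; ring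
  · rw [if_neg hc]
    have haT : a ∉ symmDiff C A := by
      rw [Finset.mem_symmDiff]; push_neg; exact ⟨fun h => absurd h hc, fun h => absurd h ha⟩
    have hY : symmDiff C (insert a A) = insert a (symmDiff C A) := by
      rw [symmDiff_insert_right ha, symmDiff_singleton_of_not_mem haT]
    have h1 := step_count (C := C) (X := A) (Y := insert a A) haT hY
    have haT2 : a ∈ symmDiff C (insert a A) := by
      rw [hY]; exact Finset.mem_insert_self a _
    have hY2 : symmDiff C A = (symmDiff C (insert a A)).erase a := by
      rw [hY, Finset.erase_insert haT]
    have h2 := step_count_zero (C := C) (X := insert a A) (Y := A) haT2 hY2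
    rw [h1, h2]; ring

lemma symmDiff_empty_right (D : Finset (Fin m)) : symmDiff D ∅ = D := by
  ext x; simp [Finset.mem_symmDiff]

lemma symmDiff_insert_insert {D A : Finset (Fin m)} {a : Fin m} (haD : a ∉ D) (haA : a ∉ A) :
    symmDiff (insert a D) (insert a A) = symmDiff D A := by
  rw [← symmDiff_singleton_of_not_mem haD, ← symmDiff_singleton_of_not_mem haA,
    symmDiff_assoc, symmDiff_comm A ({a} : Finset (Fin m)),
    symmDiff_symmDiff_cancel_left]

lemma up_closed {F : Finset (Finset (Fin m))} (hF : IsMaxIntersecting F)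
    {A B : Finset (Fin m)} (hA : A ∈ F) (hAB : A ⊆ B) : B ∈ F := by
  have hAne : A.Nonempty := by
    have := hF.1 A hA A hA; rwa [Finset.inter_self] at this
  have hint : IsIntersecting (insert B F) := by
    intro X hX Y hY
    rcases Finset.mem_insert.mp hX with hXB | hX' <;> rcases Finset.mem_insert.mp hY with hYB | hY'
    · subst hXB; subst hYB; rw [Finset.inter_self]; exact hAne.mono hAB
    · subst hXB; exact (hF.1 A hA Y hY').mono (Finset.inter_subset_inter hAB (Finset.Subset.refl Y))
    · subst hYB; exact (hF.1 X hX' A hA).mono (Finset.inter_subset_inter (Finset.Subset.refl X) hAB)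
    · exact hF.1 X hX' Y hY'
  exact hF.2 _ hint (Finset.subset_insert _ _) (Finset.mem_insert_self _ _)

lemma univ_mem (hm : 1 ≤ m) {F : Finset (Finset (Fin m))} (hF : IsMaxIntersecting F) :
    (univ : Finset (Fin m)) ∈ F := by
  have hne : (univ : Finset (Fin m)).Nonempty := ⟨⟨0, hm⟩, mem_univ _⟩
  have hint : IsIntersecting (insert univ F) := by
    intro X hX Y hY
    rcases Finset.mem_insert.mp hX with hXB | hX' <;> rcases Finset.mem_insert.mp hY with hYB | hY'
    · subst hXB; subst hYB; rwa [Finset.inter_self]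
    · subst hXB; have := hF.1 Y hY' Y hY'; rw [Finset.inter_self] at this; rwa [Finset.univ_inter]
    · subst hYB; have := hF.1 X hX' X hX'; rw [Finset.inter_self] at this; rwa [Finset.inter_univ]
    · exact hF.1 X hX' Y hY'
  exact hF.2 _ hint (Finset.subset_insert _ _) (Finset.mem_insert_self _ _)

lemma compl_mem_of_not_mem (hm : 1 ≤ m) {F : Finset (Finset (Fin m))}
    (hF : IsMaxIntersecting F) {A : Finset (Fin m)} (hA : A ∉ F) : Aᶜ ∈ F := by
  by_cases hB : ∃ B ∈ F, A ∩ B = ∅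
  · obtain ⟨B, hBF, hAB⟩ := hB
    apply up_closed hF hBF
    intro x hx
    rw [Finset.mem_compl]
    intro hxA
    have : x ∈ A ∩ B := Finset.mem_inter.mpr ⟨hxA, hx⟩
    rw [hAB] at this
    exact absurd this (Finset.notMem_empty x)
  · push_neg at hB
    exfalso
    apply hA
    have hAne : A.Nonempty := by
      have h := hB univ (univ_mem hm hF)
      rw [Finset.inter_univ] at h
      exact h
    have hint : IsIntersecting (insert A F) := by
      intro X hX Y hY
      rcases Finset.mem_insert.mp hX with hXB | hX' <;> rcases Finset.mem_insert.mp hY with hYB | hY'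
      · subst hXB; subst hYB; rwa [Finset.inter_self]
      · subst hXB; exact hB Y hY'
      · subst hYB; rw [Finset.inter_comm]; exact hB X hX'
      · exact hF.1 X hX' Y hY'
    exact hF.2 _ hint (Finset.subset_insert _ _) (Finset.mem_insert_self _ _)

lemma mem_dualFam {F : Finset (Finset (Fin m))} {D : Finset (Fin m)} :
    D ∈ dualFam F ↔ Dᶜ ∈ F := by
  unfold dualFam
  rw [Finset.mem_image]
  constructor
  · rintro ⟨B, hB, rfl⟩; rwa [compl_compl]
  · intro h; exact ⟨Dᶜ, h, compl_compl D⟩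

lemma choose_middle_max {s t : ℕ} (h1 : m ≤ 2 * s + 2) (h2 : 2 * s ≤ m) (ht : t ≤ m - 1)
    (hm : 1 ≤ m) : (m - 1).choose t ≤ (m - 1).choose s := by
  have key : (m - 1).choose s = (m - 1).choose ((m - 1) / 2) := by
    rcases (by omega : s = (m - 1) / 2 ∨ s = (m - 1) - (m - 1) / 2) with h | h
    · rw [h]
    · rw [h, Nat.choose_symm (Nat.div_le_self (m - 1) 2)]
  rw [key]
  exact Nat.choose_le_middle t (m - 1)

lemma lam_formula' (H : Finset (Finset (Fin m))) {a : Fin m} {A : Finset (Fin m)} (ha : a ∉ A) :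
    LamW H A (insert a A) = ∑ D ∈ ((univ : Finset (Fin m)).erase a).powerset,
      ((if D ∈ H then ((goodSet (symmDiff D A) a).card : ℝ) else 0)
        - (if insert a D ∈ H then ((goodSet (symmDiff D A) a).card : ℝ) else 0)) := by
  rw [lam_formula H ha]
  set f : Finset (Fin m) → ℝ := fun C =>
    if a ∈ C then -((goodSet (symmDiff C (insert a A)) a).card : ℝ)
    else ((goodSet (symmDiff C A) a).card : ℝ) with hf
  have hsub : H ⊆ (univ : Finset (Fin m)).powerset := fun C _ =>
    Finset.mem_powerset.mpr (Finset.subset_univ C)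
  have h1 : ∑ C ∈ H, f C = ∑ C ∈ (univ : Finset (Fin m)).powerset,
      (if C ∈ H then f C else 0) := by
    rw [Finset.sum_ite_mem, (Finset.inter_eq_right).mpr hsub]
  rw [h1]
  conv_lhs => rw [show (univ : Finset (Fin m)) = insert a (univ.erase a) from
    (Finset.insert_erase (mem_univ a)).symm]
  rw [Finset.sum_powerset_insert (Finset.notMem_erase a univ), ← Finset.sum_add_distrib]
  apply Finset.sum_congr rfl
  intro D hD
  rw [Finset.mem_powerset] at hD
  have haD : a ∉ D := fun h => (Finset.mem_erase.mp (hD h)).1 rfl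
  have hfD : f D = ((goodSet (symmDiff D A) a).card : ℝ) := by
    rw [hf]; simp only [if_neg haD]
  have hfiD : f (insert a D) = -((goodSet (symmDiff D A) a).card : ℝ) := by
    rw [hf]
    simp only [Finset.mem_insert_self, if_pos, symmDiff_insert_insert haD ha]
  rw [hfD, hfiD]
  by_cases h1 : D ∈ H <;> by_cases h2 : insert a D ∈ H <;>
    simp [h1, h2] <;> ring

end CentralAux

/-- Every central maximal intersecting family is `∅`-minimal. -/
theorem central_emptyMinimal (m : ℕ) (hm : 1 ≤ m) (F : Finset (Finset (Fin m)))
    (hF : IsMaxIntersecting F) (hcentral : ∀ A ∈ F, m ≤ 2 * A.card) :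
    EmptyMinimal F := by
  classical
  intro a A haA
  set H := dualFam F with hH
  have hempty : ({a} : Finset (Fin m)) = insert a (∅ : Finset (Fin m)) := by simp
  rw [hempty, CentralAux.lam_formula' H (Finset.notMem_empty a),
    CentralAux.lam_formula' H haA]
  apply Finset.sum_le_sum
  intro D hD
  rw [Finset.mem_powerset] at hD
  have haD : a ∉ D := fun h => (Finset.mem_erase.mp (hD h)).1 rfl
  rw [CentralAux.symmDiff_empty_right D]
  by_cases h2 : insert a D ∈ H
  · have h1 : D ∈ H := by
      rw [hH, CentralAux.mem_dualFam] at h2 ⊢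
      apply CentralAux.up_closed hF h2
      intro x hx
      rw [Finset.mem_compl] at hx ⊢
      exact fun hxD => hx (Finset.mem_insert_of_mem hxD)
    rw [if_pos h1, if_pos h2, if_pos h1, if_pos h2]
    simp
  · by_cases h1 : D ∈ H
    · rw [if_pos h1, if_neg h2, if_pos h1, if_neg h2, sub_zero, sub_zero]
      have hDcompl : Dᶜ ∈ F := by rwa [hH, CentralAux.mem_dualFam] at h1
      have hinsF : insert a D ∈ F := by
        rw [hH, CentralAux.mem_dualFam] at h2
        by_contra hnot
        exact h2 (CentralAux.compl_mem_of_not_mem hm hF hnot)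
      have hc1 := hcentral _ hDcompl
      rw [Finset.card_compl, Fintype.card_fin] at hc1
      have hc2 := hcentral _ hinsF
      rw [Finset.card_insert_of_notMem haD] at hc2
      have hDle : D.card ≤ m - 1 := by
        have := Finset.card_le_card hD
        rwa [Finset.card_erase_of_mem (mem_univ a), Finset.card_univ, Fintype.card_fin] at this
      have haDA : a ∉ symmDiff D A := by
        rw [Finset.mem_symmDiff]
        push_neg
        exact ⟨fun h => absurd h haD, fun h => absurd h haA⟩
      have hDAle : (symmDiff D A).card ≤ m - 1 := by
        have hsub2 : symmDiff D A ⊆ univ.erase a := fun x hx =>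
          Finset.mem_erase.mpr ⟨fun h => haDA (h ▸ hx), mem_univ x⟩
        have := Finset.card_le_card hsub2
        rwa [Finset.card_erase_of_mem (mem_univ a), Finset.card_univ, Fintype.card_fin] at this
      have e1 := CentralAux.goodSet_mul_choose haD
      have e2 := CentralAux.goodSet_mul_choose haDA
      have hch : (m - 1).choose (symmDiff D A).card ≤ (m - 1).choose D.card :=
        CentralAux.choose_middle_max (by omega) (by omega) hDAle hm
      have hpos : 0 < (m - 1).choose (symmDiff D A).card := Nat.choose_pos hDAle
      have hle : (CentralAux.goodSet D a).card ≤ (CentralAux.goodSet (symmDiff D A) a).card := by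
        have h3 : (CentralAux.goodSet D a).card * (m - 1).choose (symmDiff D A).card
            ≤ (CentralAux.goodSet (symmDiff D A) a).card
              * (m - 1).choose (symmDiff D A).card := by
          calc (CentralAux.goodSet D a).card * (m - 1).choose (symmDiff D A).card
              ≤ (CentralAux.goodSet D a).card * (m - 1).choose D.card :=
                Nat.mul_le_mul_left _ hch
            _ = (m - 1).factorial := e1
            _ = (CentralAux.goodSet (symmDiff D A) a).card
                  * (m - 1).choose (symmDiff D A).card := e2.symm
        exact Nat.le_of_mul_le_mul_right h3 hpos
      exact_mod_cast hle
    · rw [if_neg h1, if_neg h2, if_neg h1, if_neg h2]
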